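/- For 0 ≤ i ≤ q−1 set θ_i := Σ_{λ∈K} σ_0(λ)^i [λ] ∈ 𝔽[K] (with the convention 0^0 = 1, so θ_0 = Σ_{λ∈K}[λ]). Then for every tuple (i_0,…,i_{f−1}) ∈ {0,…,p−1}^f with i := Σ_{j=0}^{f−1} i_j p^j < q−1 one has θ_i = (−1)^{f−1} · (∏_{j=0}^{f−1} i_j!) · ∏_{j=0}^{f−1} Y_j^{p−1−i_j} in 𝔽[K], where ∏_j i_j! denotes the image in 𝔽 of the integer ∏_j i_j!. (Paper: Lemma 'lem:theta'(i) in §3.2.2.) -/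

import Mathlib

/-!
Setup (§3.2.2 of the paper): `p > 2` is prime, `q = p^f`, `K` is a finite field with `q`
elements, `𝔽` a field with a ring embedding `σ₀ : K → 𝔽`, and `σ_j(a) = σ₀(a)^{p^j}`.
`𝔽[K]` is the group algebra over `𝔽` of the additive group of `K`
(`AddMonoidAlgebra 𝔽 K`), with canonical basis `[a] = AddMonoidAlgebra.single a 1`, and
`Y_j = Σ_{a ∈ K^×} σ_j(a)^{−1} [a]`.
-/

namespace BHHMS

/-- `Y_j = Σ_{a ∈ K^×} σ_j(a)^{−1} [a] ∈ 𝔽[K]`, where `σ_j(a) = σ₀(a)^{p^j}`. -/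
noncomputable def Yelt (p : ℕ) {K 𝔽 : Type*} [Field K] [Fintype K] [DecidableEq K] [Field 𝔽]
    (σ₀ : K →+* 𝔽) (j : ℕ) : AddMonoidAlgebra 𝔽 K :=
  ∑ a : Kˣ, AddMonoidAlgebra.single ((a : K) : K) ((σ₀ (a : K) ^ p ^ j)⁻¹)

/-- `θ_i = Σ_{λ ∈ K} σ₀(λ)^i [λ] ∈ 𝔽[K]` (with the convention `0^0 = 1`). -/
noncomputable def thetaElt {K 𝔽 : Type*} [Field K] [Fintype K] [Field 𝔽]
    (σ₀ : K →+* 𝔽) (i : ℕ) : AddMonoidAlgebra 𝔽 K :=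
  ∑ a : K, AddMonoidAlgebra.single a (σ₀ a ^ i)

/-! ### Auxiliary sign and binomial lemmas -/

lemma neg_one_pow_congr {R : Type*} [Monoid R] [HasDistribNeg R] {a b : ℕ}
    (h : a % 2 = b % 2) : (-1 : R) ^ a = (-1) ^ b := by
  rw [← Nat.div_add_mod a 2, ← Nat.div_add_mod b 2, pow_add, pow_add, pow_mul, pow_mul,
    neg_one_sq, one_pow, one_pow, h]

section Binomials

variable {p : ℕ} [Fact p.Prime]

lemma pascal_p (s : ℕ) :
    Nat.choose (p - 1) s + Nat.choose (p - 1) (s + 1) = Nat.choose p (s + 1) := by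
  have hp1 : 1 ≤ p := (Fact.out : p.Prime).one_lt.le
  have h : p - 1 + 1 = p := by omega
  conv_rhs => rw [← h]
  rw [Nat.choose_succ_succ]

lemma choose_p_sub_one (s : ℕ) (hs : s ≤ p - 1) :
    ((Nat.choose (p - 1) s : ZMod p)) = (-1) ^ s := by
  induction s with
  | zero => simp
  | succ s ih =>
    have hdvd : (p : ℕ) ∣ Nat.choose p (s + 1) :=
      (Fact.out : p.Prime).dvd_choose_self (Nat.succ_ne_zero s) (by omega)
    have h0 : ((Nat.choose p (s + 1) : ZMod p)) = 0 :=
      (ZMod.natCast_eq_zero_iff _ _).2 hdvd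
    have ihs := ih (by omega)
    have h1 : ((Nat.choose (p-1) s : ZMod p)) + (Nat.choose (p-1) (s+1) : ZMod p) = 0 := by
      rw [← Nat.cast_add, pascal_p, h0]
    rw [ihs] at h1
    rw [pow_succ]
    linear_combination h1

lemma choose_p_sub_two (s : ℕ) (hs : s ≤ p - 2) :
    ((Nat.choose (p - 2) s : ZMod p)) = (-1) ^ s * (s + 1) := by
  have hp2 : 2 ≤ p := (Fact.out : p.Prime).two_le
  induction s with
  | zero => simp
  | succ s ih =>
    have ihs := ih (by omega)
    have hpas : Nat.choose (p - 2) s + Nat.choose (p - 2) (s + 1) = Nat.choose (p - 1) (s + 1) := by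
      have h : p - 2 + 1 = p - 1 := by omega
      conv_rhs => rw [← h]
      rw [Nat.choose_succ_succ]
    have h1 : ((Nat.choose (p-2) s : ZMod p)) + (Nat.choose (p-2) (s+1) : ZMod p)
        = (-1) ^ (s+1) := by
      rw [← Nat.cast_add, hpas, choose_p_sub_one (s+1) (by omega)]
    rw [ihs] at h1
    push_cast
    rw [pow_succ] at h1 ⊢
    linear_combination h1

lemma lucas_step (n k : ℕ) :
    ((Nat.choose n k : ZMod p)) = (Nat.choose (n % p) (k % p)) * (Nat.choose (n / p) (k / p)) := by
  have h := (Choose.choose_modEq_choose_mod_mul_choose_div_nat (p := p) (n := n) (k := k))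
  have h2 := (ZMod.natCast_eq_natCast_iff _ _ _).mpr h
  rw [h2]; push_cast; ring

lemma pow_sub_one_digits (hp : Odd p) (e : ℕ) :
    ∀ t : ℕ, t < p ^ e → ((Nat.choose (p ^ e - 1) t : ZMod p)) = (-1) ^ t := by
  have hp1 : 1 < p := (Fact.out : p.Prime).one_lt
  induction e with
  | zero =>
    intro t ht
    have h0 : t = 0 := by simpa using ht
    subst h0; simp
  | succ e ih =>
    intro t ht
    have hpe : 1 ≤ p ^ e := Nat.one_le_pow _ _ (by omega)
    have hsplit : p ^ (e+1) - 1 = (p - 1) + (p ^ e - 1) * p := by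
      have h1 : (p ^ e - 1) * p = p ^ e * p - p := by rw [Nat.sub_mul, one_mul]
      have h2 : p ≤ p ^ e * p := Nat.le_mul_of_pos_left p (by positivity)
      rw [pow_succ, h1]; omega
    have hmod : (p ^ (e+1) - 1) % p = p - 1 := by
      rw [hsplit, Nat.add_mul_mod_self_right, Nat.mod_eq_of_lt (by omega)]
    have hdiv : (p ^ (e+1) - 1) / p = p ^ e - 1 := by
      rw [hsplit, Nat.add_mul_div_right _ _ (show 0 < p by omega),
        Nat.div_eq_of_lt (by omega), zero_add]
    have htd : t / p < p ^ e := by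
      rw [Nat.div_lt_iff_lt_mul (show 0 < p by omega)]
      calc t < p ^ (e+1) := ht
        _ = p ^ e * p := pow_succ p e
    rw [lucas_step, hmod, hdiv,
      choose_p_sub_one _ (by have := Nat.mod_lt t (show 0 < p by omega); omega),
      ih _ htd, ← pow_add]
    apply neg_one_pow_congr
    obtain ⟨m, hm⟩ := hp
    have hdm := Nat.div_add_mod t p
    generalize ha : t / p = a at *
    generalize hb : t % p = b at *
    have hkey : t = 2 * (m * a) + (a + b) := by rw [← hdm, hm]; ring
    omega

lemma neg_one_pow_mod_div {R : Type*} [Monoid R] [HasDistribNeg R] (hp : Odd p) (s : ℕ) :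
    (-1 : R) ^ (s % p) * (-1) ^ (s / p) = (-1) ^ s := by
  rw [← pow_add]
  apply neg_one_pow_congr
  obtain ⟨m, hm⟩ := hp
  have hdm := Nat.div_add_mod s p
  generalize ha : s / p = a at *
  generalize hb : s % p = b at *
  have hkey : s = 2 * (m * a) + (a + b) := by rw [← hdm, hm]; ring
  omega

lemma choose_q_sub_pow (hp : Odd p) :
    ∀ f : ℕ, ∀ j : ℕ, j < f → ∀ s : ℕ, s < p ^ f → s / p ^ j % p ≤ p - 2 →
      ((Nat.choose (p ^ f - 1 - p ^ j) s : ZMod p))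
        = (-1) ^ s * (((s / p ^ j % p : ℕ) : ZMod p) + 1) := by
  have hp1 : 1 < p := (Fact.out : p.Prime).one_lt
  intro f
  induction f with
  | zero => omega
  | succ f ih =>
    intro j hj s hs hdig
    have hpf : 1 ≤ p ^ f := Nat.one_le_pow _ _ (by omega)
    have hpow : p ^ (f + 1) = p ^ f * p := pow_succ p f
    have hsd : s / p < p ^ f := by
      rw [Nat.div_lt_iff_lt_mul (show 0 < p by omega)]; omega
    match j with
    | 0 =>
      have hn : p ^ (f+1) - 1 - p ^ 0 = (p - 2) + (p ^ f - 1) * p := by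
        have h1 : (p ^ f - 1) * p = p ^ f * p - p := by rw [Nat.sub_mul, one_mul]
        have h2 : p ≤ p ^ f * p := Nat.le_mul_of_pos_left p (by positivity)
        rw [pow_zero, hpow, h1]; omega
      have hmod : (p ^ (f+1) - 1 - p ^ 0) % p = p - 2 := by
        rw [hn, Nat.add_mul_mod_self_right, Nat.mod_eq_of_lt (by omega)]
      have hdiv : (p ^ (f+1) - 1 - p ^ 0) / p = p ^ f - 1 := by
        rw [hn, Nat.add_mul_div_right _ _ (show 0 < p by omega),
          Nat.div_eq_of_lt (by omega), zero_add]
      have hdig0 : s % p ≤ p - 2 := by simpa using hdig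
      rw [lucas_step, hmod, hdiv, choose_p_sub_two _ hdig0,
        pow_sub_one_digits hp f _ hsd]
      have hmd := neg_one_pow_mod_div (p := p) (R := ZMod p) hp s
      simp only [pow_zero, Nat.div_one]
      linear_combination (((s % p : ℕ) : ZMod p) + 1) * hmd
    | (j' + 1) =>
      have hj' : j' < f := by omega
      have hpj : p ^ j' + 1 ≤ p ^ f := by
        have h1 : p ^ j' < p ^ f := Nat.pow_lt_pow_right (by omega) hj'
        omega
      have hn : p ^ (f+1) - 1 - p ^ (j'+1) = (p - 1) + (p ^ f - 1 - p ^ j') * p := by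
        have h1 : (p ^ f - 1 - p ^ j') * p = p ^ f * p - p - p ^ j' * p := by
          rw [Nat.sub_mul, Nat.sub_mul, one_mul]
        have h2 : p ^ (j'+1) = p ^ j' * p := pow_succ p j'
        have h3 : p ^ j' * p + p ≤ p ^ f * p := by
          have h := Nat.mul_le_mul_right p hpj
          rw [add_mul, one_mul] at h
          exact h
        rw [hpow, h2, h1]; omega
      have hmod : (p ^ (f+1) - 1 - p ^ (j'+1)) % p = p - 1 := by
        rw [hn, Nat.add_mul_mod_self_right, Nat.mod_eq_of_lt (by omega)]
      have hdiv : (p ^ (f+1) - 1 - p ^ (j'+1)) / p = p ^ f - 1 - p ^ j' := by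
        rw [hn, Nat.add_mul_div_right _ _ (show 0 < p by omega),
          Nat.div_eq_of_lt (by omega), zero_add]
      have hdd : s / p / p ^ j' = s / p ^ (j'+1) := by
        rw [Nat.div_div_eq_div_mul, ← pow_succ']
      have hdig' : (s / p) / p ^ j' % p ≤ p - 2 := by rw [hdd]; exact hdig
      rw [lucas_step, hmod, hdiv, choose_p_sub_one _ (by
          have := Nat.mod_lt s (show 0 < p by omega); omega),
        ih j' hj' (s / p) hsd hdig', hdd]
      have hmd := neg_one_pow_mod_div (p := p) (R := ZMod p) hp s
      linear_combination (((s / p ^ (j'+1) % p : ℕ) : ZMod p) + 1) * hmd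

lemma wilson_pair : ∀ k : ℕ, k ≤ p - 1 →
    ((-1 : ZMod p) ^ k * ((k.factorial : ℕ) : ZMod p) * (((p - 1 - k).factorial : ℕ) : ZMod p))
      = -1 := by
  have hp1 : 1 < p := (Fact.out : p.Prime).one_lt
  intro k
  induction k with
  | zero =>
    intro _
    simpa using ZMod.wilsons_lemma p
  | succ k ih =>
    intro hk
    have hih := ih (by omega)
    have hfac : (((p - 1 - k).factorial : ℕ) : ZMod p)
        = (((p - 1 - (k+1)) + 1 : ℕ) : ZMod p) * (((p - 1 - (k+1)).factorial : ℕ) : ZMod p) := by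
      rw [show p - 1 - k = (p - 1 - (k+1)) + 1 from by omega, Nat.factorial_succ, Nat.cast_mul]
    have hcast : (((p - 1 - (k+1)) + 1 : ℕ) : ZMod p) = -(((k+1 : ℕ)) : ZMod p) := by
      have hsum : ((p - 1 - (k+1)) + 1) + (k + 1) = p := by omega
      have h2 : ((((p - 1 - (k+1)) + 1) + (k + 1) : ℕ) : ZMod p) = 0 := by
        rw [hsum, ZMod.natCast_self]
      rw [Nat.cast_add] at h2
      linear_combination h2
    rw [hfac, hcast] at hih
    rw [Nat.factorial_succ, Nat.cast_mul, pow_succ]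
    linear_combination hih

end Binomials

/-! ### Sums of powers and convolution sums over a finite field -/

section FieldSums

variable {K : Type*} [Field K] [Fintype K] [DecidableEq K]

lemma sum_pow_K (r : ℕ) (hr : r ≠ 0) :
    ∑ x : K, x ^ r = if (Fintype.card K - 1) ∣ r then -1 else 0 := by
  classical
  let φ : Kˣ ↪ K := ⟨fun x ↦ x, Units.val_injective⟩
  have hmap : Finset.univ.map φ = Finset.univ \ {0} := by
    ext x
    simpa only [Finset.mem_map, Finset.mem_univ, Function.Embedding.coeFn_mk, true_and,
      Finset.mem_sdiff, Finset.mem_singleton, φ] using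
      (show (∃ a : Kˣ, (a : K) = x) ↔ ¬x = 0 from isUnit_iff_ne_zero)
  calc
    ∑ x : K, x ^ r = ∑ x ∈ Finset.univ \ {(0 : K)}, x ^ r := by
      rw [← Finset.sum_sdiff (Finset.subset_univ {0}), Finset.sum_singleton, zero_pow hr,
        add_zero]
    _ = ∑ x : Kˣ, ((x : K)) ^ r := by
      rw [← hmap, Finset.sum_map]
      rfl
    _ = if (Fintype.card K - 1) ∣ r then -1 else 0 := by
      rw [← FiniteField.sum_pow_units K r]

lemma conv_sum (hodd : Odd (Fintype.card K)) (hq2 : 2 ≤ Fintype.card K) (m n : ℕ)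
    (hm : 0 < m) (hm' : m < Fintype.card K - 1)
    (hn : 0 < n) (hn' : n < Fintype.card K - 1)
    (h : Fintype.card K - 1 ≤ m + n) (c : K) :
    ∑ a : K, a ^ m * (c - a) ^ n
      = (-1) ^ (m + 1) * (Nat.choose n (Fintype.card K - 1 - m) : K)
          * c ^ (m + n - (Fintype.card K - 1)) := by
  classical
  set q := Fintype.card K with hq
  have hq3 : 3 ≤ q := by obtain ⟨t, ht⟩ := hodd; omega
  have hqe : Even (q - 1) := by
    obtain ⟨t, ht⟩ := hodd
    exact ⟨t, by omega⟩
  have hdiv_eq : ∀ {r : ℕ}, 0 < r → r < 2 * (q - 1) → (q - 1) ∣ r → r = q - 1 := by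
    rintro r hr0 hr2 ⟨t, ht⟩
    match t with
    | 0 => omega
    | 1 => omega
    | (t + 2) =>
      exfalso
      have h2 : (q - 1) * 2 ≤ (q - 1) * (t + 2) := Nat.mul_le_mul_left _ (by omega)
      omega
  by_cases hc : c = 0
  · subst hc
    have hterm : ∀ a : K, a ^ m * (0 - a) ^ n = (-1) ^ n * a ^ (m + n) := by
      intro a
      rw [zero_sub, neg_pow, pow_add]
      ring
    rw [Finset.sum_congr rfl fun a _ => hterm a, ← Finset.mul_sum,
      sum_pow_K (m + n) (by omega)]
    by_cases hd : (q - 1) ∣ (m + n)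
    · have hmn : m + n = q - 1 := hdiv_eq (by omega) (by omega) hd
      have hnm : n = q - 1 - m := by omega
      rw [if_pos hd, hmn, Nat.sub_self, pow_zero, ← hnm, Nat.choose_self]
      rw [Nat.cast_one, mul_one, mul_one]
      have h1 : (-1 : K) ^ n * -1 = (-1) ^ (n + 1) := by ring
      rw [h1]
      apply neg_one_pow_congr
      obtain ⟨t, ht⟩ := hqe
      omega
    · have hmn : q - 1 < m + n :=
        lt_of_le_of_ne h fun he => hd (he ▸ dvd_refl (q - 1))
      rw [if_neg hd, mul_zero, zero_pow (by omega : m + n - (q - 1) ≠ 0), mul_zero]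
  · have hc1 : c ^ (q - 1) = 1 := FiniteField.pow_card_sub_one_eq_one c hc
    have step1 : ∑ a : K, a ^ m * (c - a) ^ n
        = ∑ b : K, (c * b) ^ m * (c - c * b) ^ n := by
      refine (Fintype.sum_equiv (Equiv.mulLeft₀ c hc) _ _ ?_).symm
      intro b
      rfl
    have step2 : ∀ b : K, (c * b) ^ m * (c - c * b) ^ n
        = c ^ (m + n) * (b ^ m * (1 - b) ^ n) := by
      intro b
      have hfac : c - c * b = c * (1 - b) := by ring
      rw [hfac, mul_pow, mul_pow, pow_add]
      ring
    rw [step1, Finset.sum_congr rfl fun b _ => step2 b, ← Finset.mul_sum]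
    have step3 : ∀ b : K, b ^ m * (1 - b) ^ n
        = ∑ k ∈ Finset.range (n + 1), (-1) ^ k * (Nat.choose n k : K) * b ^ (m + k) := by
      intro b
      have h1b : (1 : K) - b = -b + 1 := by ring
      rw [h1b, add_pow, Finset.mul_sum]
      refine Finset.sum_congr rfl fun k hk => ?_
      rw [neg_pow, one_pow, pow_add]
      ring
    rw [Finset.sum_congr rfl fun b _ => step3 b, Finset.sum_comm]
    have step4 : ∀ k ∈ Finset.range (n + 1),
        ∑ b : K, (-1) ^ k * (Nat.choose n k : K) * b ^ (m + k)
          = (-1) ^ k * (Nat.choose n k : K) * (if (q - 1) ∣ (m + k) then -1 else 0) := by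
      intro k _
      rw [← Finset.mul_sum, sum_pow_K (m + k) (by omega)]
    rw [Finset.sum_congr rfl step4, Finset.sum_eq_single (q - 1 - m)]
    · have hdv : (q - 1) ∣ (m + (q - 1 - m)) := by
        have : m + (q - 1 - m) = q - 1 := by omega
        rw [this]
      rw [if_pos hdv]
      have hpow : c ^ (m + n) = c ^ (m + n - (q - 1)) := by
        conv_lhs => rw [show m + n = (q - 1) + (m + n - (q - 1)) by omega]
        rw [pow_add, hc1, one_mul]
      rw [hpow]
      have hsgn : (-1 : K) ^ (q - 1 - m) * -1 = (-1) ^ (m + 1) := by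
        have h1 : (-1 : K) ^ (q - 1 - m) * -1 = (-1) ^ (q - 1 - m + 1) := by ring
        rw [h1]
        apply neg_one_pow_congr
        obtain ⟨t, ht⟩ := hqe
        omega
      linear_combination (c ^ (m + n - (q - 1)) * (Nat.choose n (q - 1 - m) : K)) * hsgn
    · intro k hk hkne
      have hklt : k ≤ n := by simpa [Nat.lt_succ_iff] using hk
      have hnd : ¬ (q - 1) ∣ (m + k) := by
        intro hd
        have := hdiv_eq (by omega) (by omega) hd
        omega
      rw [if_neg hnd, mul_zero]
    · intro habs
      exact absurd (Finset.mem_range.mpr (by omega)) habs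

end FieldSums

/-! ### Multiplication of theta elements -/

section Theta

variable {K 𝔽 : Type*} [Field K] [Fintype K] [DecidableEq K] [Field 𝔽] (σ₀ : K →+* 𝔽)

lemma theta_mul (hodd : Odd (Fintype.card K)) (hq2 : 2 ≤ Fintype.card K) (m n : ℕ)
    (hm : 0 < m) (hm' : m < Fintype.card K - 1)
    (hn : 0 < n) (hn' : n < Fintype.card K - 1)
    (h : Fintype.card K - 1 ≤ m + n) :
    thetaElt σ₀ m * thetaElt σ₀ n
      = ((-1) ^ (m + 1) * (Nat.choose n (Fintype.card K - 1 - m) : 𝔽))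
          • thetaElt σ₀ (m + n - (Fintype.card K - 1)) := by
  classical
  unfold thetaElt
  rw [Finset.sum_mul_sum, Finset.smul_sum]
  have step1 : ∀ a : K,
      ∑ b : K, AddMonoidAlgebra.single a (σ₀ a ^ m) * AddMonoidAlgebra.single b (σ₀ b ^ n)
        = ∑ c : K, AddMonoidAlgebra.single c (σ₀ a ^ m * σ₀ (c - a) ^ n) := by
    intro a
    refine Fintype.sum_equiv (Equiv.addLeft a) _ _ ?_
    intro b
    rw [AddMonoidAlgebra.single_mul_single]
    have hcoe : (Equiv.addLeft a) b = a + b := rfl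
    rw [hcoe, add_sub_cancel_left]
  rw [Finset.sum_congr rfl fun a _ => step1 a, Finset.sum_comm]
  refine Finset.sum_congr rfl fun c _ => ?_
  have hsingle : ∑ a : K, AddMonoidAlgebra.single c (σ₀ a ^ m * σ₀ (c - a) ^ n)
      = AddMonoidAlgebra.single c (∑ a : K, σ₀ a ^ m * σ₀ (c - a) ^ n) :=
    (map_sum (AddMonoidAlgebra.singleAddHom c) _ _).symm
  rw [hsingle]
  have hval : ∑ a : K, σ₀ a ^ m * σ₀ (c - a) ^ n
      = (-1) ^ (m + 1) * (Nat.choose n (Fintype.card K - 1 - m) : 𝔽)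
          * σ₀ c ^ (m + n - (Fintype.card K - 1)) := by
    have h1 : ∀ a : K, σ₀ a ^ m * σ₀ (c - a) ^ n = σ₀ (a ^ m * (c - a) ^ n) := by
      intro a
      rw [map_mul, map_pow, map_pow]
    rw [Finset.sum_congr rfl fun a _ => h1 a, ← map_sum σ₀,
      conv_sum hodd hq2 m n hm hm' hn hn' h c, map_mul, map_mul, map_pow, map_pow,
      map_neg, map_one, map_natCast]
  rw [hval, AddMonoidAlgebra.smul_single']

lemma Y_eq_theta (p : ℕ) (j : ℕ) (hj : p ^ j < Fintype.card K - 1) :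
    Yelt p σ₀ j = thetaElt σ₀ (Fintype.card K - 1 - p ^ j) := by
  classical
  unfold Yelt thetaElt
  have he : Fintype.card K - 1 - p ^ j ≠ 0 := by omega
  symm
  let φ : Kˣ ↪ K := ⟨fun x ↦ x, Units.val_injective⟩
  have hmap : Finset.univ.map φ = Finset.univ \ {0} := by
    ext x
    simpa only [Finset.mem_map, Finset.mem_univ, Function.Embedding.coeFn_mk, true_and,
      Finset.mem_sdiff, Finset.mem_singleton, φ] using
      (show (∃ a : Kˣ, (a : K) = x) ↔ ¬x = 0 from isUnit_iff_ne_zero)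
  calc
    ∑ x : K, AddMonoidAlgebra.single x (σ₀ x ^ (Fintype.card K - 1 - p ^ j))
        = ∑ x ∈ Finset.univ \ {(0 : K)},
            AddMonoidAlgebra.single x (σ₀ x ^ (Fintype.card K - 1 - p ^ j)) := by
      rw [← Finset.sum_sdiff (Finset.subset_univ {0}), Finset.sum_singleton, map_zero,
        zero_pow he, AddMonoidAlgebra.single_zero, add_zero]
    _ = ∑ x : Kˣ, AddMonoidAlgebra.single ((x : K))
          (σ₀ (x : K) ^ (Fintype.card K - 1 - p ^ j)) := by
      rw [← hmap, Finset.sum_map]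
      rfl
    _ = ∑ x : Kˣ, AddMonoidAlgebra.single (((x : K) : K)) ((σ₀ (x : K) ^ p ^ j)⁻¹) := by
      refine Finset.sum_congr rfl fun x _ => ?_
      congr 1
      have hx1 : σ₀ (x : K) ^ (Fintype.card K - 1) = 1 := by
        rw [← map_pow, FiniteField.pow_card_sub_one_eq_one _ (Units.ne_zero x), map_one]
      refine eq_inv_of_mul_eq_one_left ?_
      rw [← pow_add]
      rw [show Fintype.card K - 1 - p ^ j + p ^ j = Fintype.card K - 1 from by omega]
      exact hx1

end Theta

/-! ### Digits of sums -/

lemma digit_lemma (p : ℕ) (hp : 2 ≤ p) {f : ℕ} (k : Fin f → ℕ) (hk : ∀ j, k j < p)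
    (j₀ : Fin f) (hlow : ∀ l : Fin f, l < j₀ → k l = 0) :
    (∑ j, k j * p ^ (j : ℕ)) / p ^ (j₀ : ℕ) % p = k j₀ := by
  classical
  set Kn : ℕ → ℕ := fun i => if h : i < f then k ⟨i, h⟩ else 0 with hKn
  have h0 : ∑ j : Fin f, k j * p ^ (j : ℕ) = ∑ i ∈ Finset.range f, Kn i * p ^ i := by
    rw [← Fin.sum_univ_eq_sum_range (fun i => Kn i * p ^ i) f]
    refine Finset.sum_congr rfl fun j _ => ?_
    simp [hKn, j.isLt]
  set j₀v := (j₀ : ℕ) with hj₀v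
  have hj₀f : j₀v < f := j₀.isLt
  have hIco : ∑ i ∈ Finset.range f, Kn i * p ^ i = ∑ i ∈ Finset.Ico j₀v f, Kn i * p ^ i := by
    rw [Finset.range_eq_Ico]
    symm
    refine Finset.sum_subset (Finset.Ico_subset_Ico (by omega) le_rfl) ?_
    intro i hi hni
    simp only [Finset.mem_Ico] at hi hni
    have hilt : i < j₀v := by omega
    have hKni : Kn i = 0 := by
      have hif : i < f := hi.2
      have := hlow ⟨i, hif⟩ (by simpa [Fin.lt_def] using hilt)
      simp [hKn, hif, this]
    rw [hKni, zero_mul]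
  have hmem : j₀v ∈ Finset.Ico j₀v f := Finset.mem_Ico.mpr ⟨le_rfl, hj₀f⟩
  have hsplit := Finset.sum_eq_add_sum_sdiff_singleton_of_mem hmem (fun i => Kn i * p ^ i)
  set R := ∑ i ∈ Finset.Ico j₀v f \ {j₀v}, Kn i * p ^ (i - j₀v - 1) with hR
  have hrest : ∑ i ∈ Finset.Ico j₀v f \ {j₀v}, Kn i * p ^ i = p ^ j₀v * p * R := by
    rw [hR, Finset.mul_sum]
    refine Finset.sum_congr rfl fun i hi => ?_
    simp only [Finset.mem_sdiff, Finset.mem_Ico, Finset.mem_singleton] at hi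
    have hige : j₀v + 1 ≤ i := by omega
    have hpow : p ^ i = p ^ j₀v * p * p ^ (i - j₀v - 1) := by
      rw [← pow_succ, ← pow_add]
      congr 1
      omega
    rw [hpow]
    ring
  have hKj₀ : Kn j₀v = k j₀ := by simp [hKn, hj₀f, hj₀v]
  have htot : ∑ j : Fin f, k j * p ^ (j : ℕ) = p ^ j₀v * (k j₀ + p * R) := by
    rw [h0, hIco, hsplit, hrest, hKj₀]
    ring
  rw [htot, Nat.mul_div_cancel_left _ (pow_pos (by omega) j₀v), Nat.add_mul_mod_self_left,
    Nat.mod_eq_of_lt (hk j₀)]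

/-! ### The key multiplication step -/

lemma charP_K (p f : ℕ) [Fact p.Prime] (hf : 1 ≤ f)
    (K : Type*) [Field K] [Fintype K] (hK : Fintype.card K = p ^ f) : CharP K p := by
  have pp : p.Prime := Fact.out
  have hc := ringChar.charP K
  obtain ⟨n, hn1, hn2⟩ := FiniteField.card K (ringChar K)
  have hdvd : p ∣ ringChar K ^ (n : ℕ) := by
    rw [← hn2, hK]
    exact dvd_pow_self p (by omega)
  have hpr : p ∣ ringChar K := pp.dvd_of_dvd_pow hdvd
  have heq : ringChar K = p := ((Nat.prime_dvd_prime_iff_eq pp hn1).mp hpr).symm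
  rwa [heq] at hc

lemma theta_step (p f : ℕ) [Fact p.Prime] (hp : 2 < p) (hf : 1 ≤ f)
    {K : Type*} [Field K] [Fintype K] [DecidableEq K] (hK : Fintype.card K = p ^ f)
    {𝔽 : Type*} [Field 𝔽] (σ₀ : K →+* 𝔽)
    (j₀ : ℕ) (hj₀ : j₀ < f) (s' : ℕ) (h1 : 1 ≤ s')
    (h2 : s' + p ^ j₀ ≤ p ^ f - 1) (hdig : s' / p ^ j₀ % p ≤ p - 2) :
    thetaElt σ₀ (p ^ f - 1 - s') * Yelt p σ₀ j₀
      = (-(((s' / p ^ j₀ % p + 1 : ℕ)) : 𝔽)) • thetaElt σ₀ (p ^ f - 1 - (s' + p ^ j₀)) := by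
  have pp : p.Prime := Fact.out
  have hpodd : Odd p := pp.odd_of_ne_two (by omega)
  have hoddq : Odd (Fintype.card K) := by rw [hK]; exact hpodd.pow
  have hple : p ≤ p ^ f := Nat.le_self_pow (by omega) p
  have hq2 : 2 ≤ Fintype.card K := by rw [hK]; omega
  have hpj1 : 1 ≤ p ^ j₀ := Nat.one_le_pow _ _ (by omega)
  have hYt : Yelt p σ₀ j₀ = thetaElt σ₀ (p ^ f - 1 - p ^ j₀) := by
    have h := Y_eq_theta σ₀ p j₀ (by rw [hK]; omega)
    rw [h, hK]
  rw [hYt]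
  have hmul := theta_mul σ₀ hoddq hq2 (p ^ f - 1 - s') (p ^ f - 1 - p ^ j₀)
    (by omega) (by rw [hK]; omega) (by omega) (by rw [hK]; omega) (by rw [hK]; omega)
  rw [hK] at hmul
  rw [show (p ^ f - 1 - s') + (p ^ f - 1 - p ^ j₀) - (p ^ f - 1)
      = p ^ f - 1 - (s' + p ^ j₀) from by omega,
    show p ^ f - 1 - (p ^ f - 1 - s') = s' from by omega] at hmul
  rw [hmul]
  congr 1
  haveI hchK : CharP K p := charP_K p f hf K hK
  haveI hch𝔽 : CharP 𝔽 p := charP_of_injective_ringHom σ₀.injective p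
  set χ : ZMod p →+* 𝔽 := ZMod.castHom dvd_rfl 𝔽 with hχ
  have hzm := choose_q_sub_pow (p := p) hpodd f j₀ hj₀ s' (by omega) hdig
  have hcast : ((Nat.choose (p ^ f - 1 - p ^ j₀) s' : ℕ) : 𝔽)
      = (-1) ^ s' * (((s' / p ^ j₀ % p : ℕ) : 𝔽) + 1) := by
    have h := congrArg χ hzm
    rw [map_natCast] at h
    rw [h, map_mul, map_pow, map_neg, map_one, map_add, map_natCast, map_one]
  have hsgn : (-1 : 𝔽) ^ (p ^ f - 1 - s' + 1) * (-1) ^ s' = -1 := by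
    rw [← pow_add, show (p ^ f - 1 - s' + 1) + s' = p ^ f from by omega]
    exact Odd.neg_one_pow hpodd.pow
  rw [hcast, Nat.cast_add, Nat.cast_one]
  linear_combination (((s' / p ^ j₀ % p : ℕ) : 𝔽) + 1) * hsgn

/-! ### The product of the `Y_j`'s -/

lemma prod_Y_eq (p f : ℕ) [Fact p.Prime] (hp : 2 < p) (hf : 1 ≤ f)
    {K : Type*} [Field K] [Fintype K] [DecidableEq K] (hK : Fintype.card K = p ^ f)
    {𝔽 : Type*} [Field 𝔽] (σ₀ : K →+* 𝔽) :
    ∀ N : ℕ, ∀ k : Fin f → ℕ, (∑ j, k j) = N → (∀ j, k j ≤ p - 1) →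
      1 ≤ ∑ j, k j * p ^ (j : ℕ) → ∑ j, k j * p ^ (j : ℕ) ≤ p ^ f - 1 →
      ∏ j : Fin f, Yelt p σ₀ (j : ℕ) ^ k j
        = (- ∏ j, ((-1 : 𝔽) ^ k j * ((k j).factorial : 𝔽)))
            • thetaElt σ₀ (p ^ f - 1 - ∑ j, k j * p ^ (j : ℕ)) := by
  intro N
  induction N with
  | zero =>
    intro k hsum hkle h1 h2
    exfalso
    have hzero : ∀ j, k j = 0 := by
      intro j
      have := Finset.sum_eq_zero_iff.mp hsum j (Finset.mem_univ j)
      exact this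
    have : ∑ j, k j * p ^ (j : ℕ) = 0 :=
      Finset.sum_eq_zero fun j _ => by rw [hzero j, zero_mul]
    omega
  | succ N ih =>
    intro k hsum hkle h1 h2
    classical
    have hex : ∃ j, k j ≠ 0 := by
      by_contra hcon
      push_neg at hcon
      rw [Finset.sum_eq_zero fun j _ => hcon j] at hsum
      omega
    set T := Finset.univ.filter (fun j => k j ≠ 0) with hT
    have hTne : T.Nonempty := by
      obtain ⟨j, hj⟩ := hex
      exact ⟨j, by simp [hT, hj]⟩
    set j₀ := T.min' hTne with hj₀def
    have hj₀mem : j₀ ∈ T := T.min'_mem hTne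
    have hj₀ : k j₀ ≠ 0 := (Finset.mem_filter.mp hj₀mem).2
    have hlow : ∀ l : Fin f, l < j₀ → k l = 0 := by
      intro l hl
      by_contra hne
      exact absurd (T.min'_le l (by simp [hT, hne])) (not_le.mpr hl)
    set k' := Function.update k j₀ (k j₀ - 1) with hk'def
    have hk'j₀ : k' j₀ = k j₀ - 1 := Function.update_self j₀ _ k
    have hk'ne : ∀ j, j ≠ j₀ → k' j = k j := fun j hj => Function.update_of_ne hj _ k
    have hk'le : ∀ j, k' j ≤ p - 1 := by
      intro j
      by_cases hj : j = j₀
      · rw [hj, hk'j₀]; have := hkle j₀; omega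
      · rw [hk'ne j hj]; exact hkle j
    have hk'lt : ∀ j, k' j < p := fun j => by have := hk'le j; omega
    -- sums
    have hsplitu : ∑ j, k j = k j₀ + ∑ j ∈ Finset.univ \ {j₀}, k j :=
      Finset.sum_eq_add_sum_sdiff_singleton_of_mem (Finset.mem_univ j₀) k
    have hsplitu' : ∑ j, k' j = k' j₀ + ∑ j ∈ Finset.univ \ {j₀}, k' j :=
      Finset.sum_eq_add_sum_sdiff_singleton_of_mem (Finset.mem_univ j₀) k'
    have hrests : ∑ j ∈ Finset.univ \ {j₀}, k' j = ∑ j ∈ Finset.univ \ {j₀}, k j := by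
      refine Finset.sum_congr rfl fun j hj => ?_
      exact hk'ne j (by simpa [Finset.mem_sdiff] using (Finset.mem_sdiff.mp hj).2)
    have hsum' : ∑ j, k' j = N := by
      rw [hsplitu', hrests, hk'j₀]
      rw [hsplitu] at hsum
      omega
    have hsplits : ∑ j, k j * p ^ (j : ℕ)
        = k j₀ * p ^ (j₀ : ℕ) + ∑ j ∈ Finset.univ \ {j₀}, k j * p ^ (j : ℕ) :=
      Finset.sum_eq_add_sum_sdiff_singleton_of_mem (Finset.mem_univ j₀) _
    have hsplits' : ∑ j, k' j * p ^ (j : ℕ)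
        = k' j₀ * p ^ (j₀ : ℕ) + ∑ j ∈ Finset.univ \ {j₀}, k' j * p ^ (j : ℕ) :=
      Finset.sum_eq_add_sum_sdiff_singleton_of_mem (Finset.mem_univ j₀) _
    have hrests2 : ∑ j ∈ Finset.univ \ {j₀}, k' j * p ^ (j : ℕ)
        = ∑ j ∈ Finset.univ \ {j₀}, k j * p ^ (j : ℕ) := by
      refine Finset.sum_congr rfl fun j hj => ?_
      rw [hk'ne j (by simpa [Finset.mem_sdiff] using (Finset.mem_sdiff.mp hj).2)]
    have hmulpeel : k j₀ * p ^ (j₀ : ℕ) = (k j₀ - 1) * p ^ (j₀ : ℕ) + p ^ (j₀ : ℕ) := by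
      have h := add_mul (k j₀ - 1) 1 (p ^ (j₀ : ℕ))
      rw [one_mul] at h
      rw [show k j₀ = k j₀ - 1 + 1 from by omega]
      exact h
    have hs' : ∑ j, k' j * p ^ (j : ℕ) = (∑ j, k j * p ^ (j : ℕ)) - p ^ (j₀ : ℕ) := by
      rw [hsplits', hrests2, hk'j₀, hsplits, hmulpeel]
      omega
    have hs'add : (∑ j, k' j * p ^ (j : ℕ)) + p ^ (j₀ : ℕ) = ∑ j, k j * p ^ (j : ℕ) := by
      rw [hsplits', hrests2, hk'j₀, hsplits, hmulpeel]
      omega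
    -- product splitting
    have hprodk : ∏ j : Fin f, Yelt p σ₀ (j : ℕ) ^ k j
        = Yelt p σ₀ (j₀ : ℕ) ^ k j₀ * ∏ j ∈ Finset.univ \ {j₀}, Yelt p σ₀ (j : ℕ) ^ k j :=
      Finset.prod_eq_mul_prod_sdiff_singleton_of_mem (Finset.mem_univ j₀) _
    have hprodk' : ∏ j : Fin f, Yelt p σ₀ (j : ℕ) ^ k' j
        = Yelt p σ₀ (j₀ : ℕ) ^ (k j₀ - 1)
            * ∏ j ∈ Finset.univ \ {j₀}, Yelt p σ₀ (j : ℕ) ^ k j := by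
      rw [Finset.prod_eq_mul_prod_sdiff_singleton_of_mem (Finset.mem_univ j₀), hk'j₀]
      congr 1
      refine Finset.prod_congr rfl fun j hj => ?_
      rw [hk'ne j (by simpa [Finset.mem_sdiff] using (Finset.mem_sdiff.mp hj).2)]
    have hpowpeel : Yelt p σ₀ (j₀ : ℕ) ^ k j₀
        = Yelt p σ₀ (j₀ : ℕ) ^ (k j₀ - 1) * Yelt p σ₀ (j₀ : ℕ) := by
      conv_lhs => rw [show k j₀ = k j₀ - 1 + 1 from by omega]
      rw [pow_succ]
    have hfactored : ∏ j : Fin f, Yelt p σ₀ (j : ℕ) ^ k j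
        = (∏ j : Fin f, Yelt p σ₀ (j : ℕ) ^ k' j) * Yelt p σ₀ (j₀ : ℕ) := by
      rw [hprodk, hprodk', hpowpeel]
      exact mul_right_comm _ _ _
    -- the digit of the partial sum at j₀
    have hlow' : ∀ l : Fin f, l < j₀ → k' l = 0 := by
      intro l hl
      rw [hk'ne l (by intro h; rw [h] at hl; exact lt_irrefl _ hl)]
      exact hlow l hl
    have hdig : (∑ j, k' j * p ^ (j : ℕ)) / p ^ (j₀ : ℕ) % p = k j₀ - 1 := by
      rw [digit_lemma p (by omega) k' hk'lt j₀ hlow', hk'j₀]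
    by_cases hN0 : N = 0
    · -- base case : k is supported at j₀ with k j₀ = 1
      subst hN0
      have hallz : ∀ j, k' j = 0 := by
        intro j
        exact Finset.sum_eq_zero_iff.mp hsum' j (Finset.mem_univ j)
      have hkj₀1 : k j₀ = 1 := by
        have := hallz j₀
        rw [hk'j₀] at this
        omega
      have hothers : ∀ j ∈ Finset.univ \ {j₀}, k j = 0 := by
        intro j hj
        have hne := (Finset.mem_sdiff.mp hj).2
        rw [← hk'ne j (by simpa using hne)]
        exact hallz j
      have hsval : ∑ j, k j * p ^ (j : ℕ) = p ^ (j₀ : ℕ) := by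
        rw [hsplits, hkj₀1, one_mul, Finset.sum_eq_zero fun j hj => by
          rw [hothers j hj, zero_mul], add_zero]
      have hprodval : ∏ j : Fin f, Yelt p σ₀ (j : ℕ) ^ k j = Yelt p σ₀ (j₀ : ℕ) := by
        rw [hprodk, hkj₀1, pow_one, Finset.prod_eq_one fun j hj => by
          rw [hothers j hj, pow_zero], mul_one]
      have hconst : (- ∏ j, ((-1 : 𝔽) ^ k j * ((k j).factorial : 𝔽))) = 1 := by
        rw [Finset.prod_eq_single j₀ (fun j _ hj => by
            rw [hothers j (by simp [hj]), pow_zero, Nat.factorial_zero, Nat.cast_one, one_mul])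
          (fun h => absurd (Finset.mem_univ j₀) h), hkj₀1]
        simp
      rw [hprodval, hconst, hsval, one_smul]
      have hj₀f : (j₀ : ℕ) < f := j₀.isLt
      have hb1 : p ^ (j₀ : ℕ) ≤ p ^ (f - 1) := Nat.pow_le_pow_right (by omega) (by omega)
      have hb2 : p ^ f = p ^ (f - 1) * p := by
        rw [← pow_succ]
        congr 1
        omega
      have hb3 : p ^ (f - 1) * 3 ≤ p ^ (f - 1) * p := Nat.mul_le_mul_left _ (by omega)
      have hb4 : 1 ≤ p ^ (f - 1) := Nat.one_le_pow _ _ (by omega)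
      have hstrict : p ^ (j₀ : ℕ) < p ^ f - 1 := by omega
      have h := Y_eq_theta σ₀ p (j₀ : ℕ) (by rw [hK]; omega)
      rw [h, hK]
    · -- inductive step
      have hN1 : 1 ≤ N := by omega
      have h1' : 1 ≤ ∑ j, k' j * p ^ (j : ℕ) := by
        have hle : ∑ j, k' j ≤ ∑ j, k' j * p ^ (j : ℕ) :=
          Finset.sum_le_sum fun j _ =>
            Nat.le_mul_of_pos_right _ (pow_pos (by omega) _)
        omega
      have h2' : ∑ j, k' j * p ^ (j : ℕ) ≤ p ^ f - 1 := by omega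
      have hIH := ih k' hsum' hk'le h1' h2'
      have hj₀f : (j₀ : ℕ) < f := j₀.isLt
      have hstep := theta_step p f hp hf hK σ₀ (j₀ : ℕ) hj₀f
        (∑ j, k' j * p ^ (j : ℕ)) h1' (by omega)
        (by rw [hdig]; have := hkle j₀; omega)
      rw [hs'add] at hstep
      rw [hfactored, hIH, smul_mul_assoc, hstep, smul_smul, hdig]
      congr 1
      -- scalars
      have hsplitc : ∏ j, ((-1 : 𝔽) ^ k j * ((k j).factorial : 𝔽))
          = ((-1 : 𝔽) ^ k j₀ * ((k j₀).factorial : 𝔽))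
              * ∏ j ∈ Finset.univ \ {j₀}, ((-1 : 𝔽) ^ k j * ((k j).factorial : 𝔽)) :=
        Finset.prod_eq_mul_prod_sdiff_singleton_of_mem (Finset.mem_univ j₀) _
      have hsplitc' : ∏ j, ((-1 : 𝔽) ^ k' j * ((k' j).factorial : 𝔽))
          = ((-1 : 𝔽) ^ (k j₀ - 1) * (((k j₀ - 1).factorial : ℕ) : 𝔽))
              * ∏ j ∈ Finset.univ \ {j₀}, ((-1 : 𝔽) ^ k j * ((k j).factorial : 𝔽)) := by
        rw [Finset.prod_eq_mul_prod_sdiff_singleton_of_mem (Finset.mem_univ j₀), hk'j₀]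
        congr 1
        refine Finset.prod_congr rfl fun j hj => ?_
        rw [hk'ne j (by simpa [Finset.mem_sdiff] using (Finset.mem_sdiff.mp hj).2)]
      rw [hsplitc, hsplitc']
      set X := ∏ j ∈ Finset.univ \ {j₀}, ((-1 : 𝔽) ^ k j * ((k j).factorial : 𝔽)) with hX
      have hfa : ((k j₀).factorial : 𝔽) = ((k j₀ : ℕ) : 𝔽) * (((k j₀ - 1).factorial : ℕ) : 𝔽) := by
        conv_lhs => rw [show k j₀ = (k j₀ - 1) + 1 from by omega, Nat.factorial_succ]
        rw [Nat.cast_mul]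
        congr 2
        omega
      have hsg : (-1 : 𝔽) ^ (k j₀ - 1) = -(-1 : 𝔽) ^ k j₀ := by
        conv_rhs => rw [show k j₀ = (k j₀ - 1) + 1 from by omega]
        rw [pow_succ]
        ring
      have hc1 : ((k j₀ - 1 + 1 : ℕ) : 𝔽) = ((k j₀ : ℕ) : 𝔽) := by
        congr 1
        omega
      rw [hc1, hfa, hsg]
      ring

/-! ### A geometric sum -/

lemma geom_p (p : ℕ) (hp : 1 ≤ p) : ∀ n : ℕ, ∑ t ∈ Finset.range n, (p - 1) * p ^ t = p ^ n - 1 := by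
  intro n
  induction n with
  | zero => simp
  | succ n ihn =>
    rw [Finset.sum_range_succ, ihn]
    have h1 : (p - 1) * p ^ n = p * p ^ n - p ^ n := by rw [Nat.sub_mul, one_mul]
    have h2 : p ^ (n + 1) = p ^ n * p := pow_succ p n
    have h3 : 1 ≤ p ^ n := Nat.one_le_pow _ _ (by omega)
    have h4 : p ^ n ≤ p * p ^ n := Nat.le_mul_of_pos_left _ (by omega)
    have h5 : p ^ n * p = p * p ^ n := Nat.mul_comm _ _
    omega

/-- Lemma `lem:theta`(i), §3.2.2.  For every tuple
`(i_0,…,i_{f−1}) ∈ {0,…,p−1}^f` with `i = Σ_j i_j p^j < q − 1` one has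
`θ_i = (−1)^{f−1} (∏_j i_j!) ∏_j Y_j^{p−1−i_j}` in `𝔽[K]`. -/
theorem statement15 (p f : ℕ) [Fact p.Prime] (hp : 2 < p) (hf : 1 ≤ f)
    (K : Type*) [Field K] [Fintype K] [DecidableEq K] (hK : Fintype.card K = p ^ f)
    (𝔽 : Type*) [Field 𝔽] (σ₀ : K →+* 𝔽)
    (idx : Fin f → ℕ) (hidx : ∀ j, idx j ≤ p - 1)
    (hlt : ∑ j : Fin f, idx j * p ^ (j : ℕ) < p ^ f - 1) :
    thetaElt σ₀ (∑ j : Fin f, idx j * p ^ (j : ℕ))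
      = ((-1 : 𝔽) ^ (f - 1) * ∏ j : Fin f, ((idx j).factorial : 𝔽)) •
          ∏ j : Fin f, Yelt p σ₀ (j : ℕ) ^ (p - 1 - idx j) := by
  classical
  have pp : p.Prime := Fact.out
  set i := ∑ j : Fin f, idx j * p ^ (j : ℕ) with hi
  set k : Fin f → ℕ := fun j => p - 1 - idx j with hkdef
  have hkle : ∀ j, k j ≤ p - 1 := fun j => by simp only [hkdef]; omega
  have hsum_si : (∑ j : Fin f, k j * p ^ (j : ℕ)) + i = p ^ f - 1 := by
    rw [hi, ← Finset.sum_add_distrib]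
    have hterm : ∀ j : Fin f, k j * p ^ (j : ℕ) + idx j * p ^ (j : ℕ)
        = (p - 1) * p ^ (j : ℕ) := by
      intro j
      rw [← add_mul]
      congr 1
      have := hidx j
      simp only [hkdef]
      omega
    rw [Finset.sum_congr rfl fun j _ => hterm j,
      Fin.sum_univ_eq_sum_range (fun t => (p - 1) * p ^ t) f, geom_p p (by omega) f]
  have hilt : i < p ^ f - 1 := hlt
  have hs_eq : ∑ j : Fin f, k j * p ^ (j : ℕ) = p ^ f - 1 - i := by omega
  have hP := prod_Y_eq p f hp hf hK σ₀ (∑ j : Fin f, k j) k rfl hkle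
    (by omega) (by omega)
  rw [hs_eq, show p ^ f - 1 - (p ^ f - 1 - i) = i from by omega] at hP
  have hgoal : ∏ j : Fin f, Yelt p σ₀ (j : ℕ) ^ (p - 1 - idx j)
      = ∏ j : Fin f, Yelt p σ₀ (j : ℕ) ^ k j := rfl
  rw [hgoal, hP, smul_smul]
  -- it remains to show the scalar is 1
  haveI hchK : CharP K p := charP_K p f hf K hK
  haveI hch𝔽 : CharP 𝔽 p := charP_of_injective_ringHom σ₀.injective p
  set χ : ZMod p →+* 𝔽 := ZMod.castHom dvd_rfl 𝔽 with hχ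
  have hwil : ∀ j : Fin f, ((idx j).factorial : 𝔽) * ((-1 : 𝔽) ^ k j * ((k j).factorial : 𝔽))
      = -1 := by
    intro j
    have hz := wilson_pair (p := p) (k j) (hkle j)
    have hpk : p - 1 - k j = idx j := by
      have := hidx j
      simp only [hkdef]
      omega
    rw [hpk] at hz
    have h := congrArg χ hz
    simp only [map_mul, map_pow, map_neg, map_one, map_natCast] at h
    linear_combination h
  have hscal : ((-1 : 𝔽) ^ (f - 1) * ∏ j : Fin f, ((idx j).factorial : 𝔽))
      * (- ∏ j : Fin f, ((-1 : 𝔽) ^ k j * ((k j).factorial : 𝔽))) = 1 := by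
    have hcomb : (∏ j : Fin f, ((idx j).factorial : 𝔽))
        * ∏ j : Fin f, ((-1 : 𝔽) ^ k j * ((k j).factorial : 𝔽))
          = ∏ j : Fin f, (-1 : 𝔽) := by
      rw [← Finset.prod_mul_distrib]
      exact Finset.prod_congr rfl fun j _ => hwil j
    have hprodneg : ∏ j : Fin f, (-1 : 𝔽) = (-1) ^ f := by
      rw [Finset.prod_const, Finset.card_univ, Fintype.card_fin]
    have h2f : Odd ((f - 1) + f) := ⟨f - 1, by omega⟩
    calc ((-1 : 𝔽) ^ (f - 1) * ∏ j : Fin f, ((idx j).factorial : 𝔽))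
        * (- ∏ j : Fin f, ((-1 : 𝔽) ^ k j * ((k j).factorial : 𝔽)))
        = -((-1 : 𝔽) ^ (f - 1) * ((∏ j : Fin f, ((idx j).factorial : 𝔽))
            * ∏ j : Fin f, ((-1 : 𝔽) ^ k j * ((k j).factorial : 𝔽)))) := by ring
      _ = -((-1 : 𝔽) ^ (f - 1) * (-1) ^ f) := by rw [hcomb, hprodneg]
      _ = 1 := by rw [← pow_add, Odd.neg_one_pow h2f, neg_neg]
  rw [hscal, one_smul]

end BHHMS
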